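/- Define h(x,y) = e^x + e^y − 2·(e^x − e^y)/(x − y) for x ≠ y. Then for any a < b < c < d, h(a,c)·h(b,d) ≥ h(b,c)·h(a,d) + h(a,b)·h(c,d). -/

import Mathlib

open MeasureTheory Real Filter Finset Asymptotics

/-- Divided difference of the exponential at nodes `x 0, …, x n`
(Hermite–Genocchi iterated-integral form, valid for repeated nodes). -/
noncomputable def expDD {n : ℕ} (x : Fin (n + 1) → ℝ) : ℝ :=
  ∫ t in {t : Fin n → ℝ | (∀ i, 0 ≤ t i ∧ t i ≤ 1) ∧ ∀ i j : Fin n, i ≤ j → t j ≤ t i},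
    Real.exp (x 0 + ∑ i : Fin n, t i * (x i.succ - x i.castSucc))

/-- Node tuple `a 0 ≤ … ≤ a (n-1)` followed by `x` with multiplicity `p+1`
and `y` with multiplicity `q+1`. -/
noncomputable def nodesPQ (n p q : ℕ) (a : Fin n → ℝ) (x y : ℝ) :
    Fin (n + (p + 1) + (q + 1)) → ℝ := fun i =>
  if h : (i : ℕ) < n then a ⟨i, h⟩ else if (i : ℕ) < n + (p + 1) then x else y

/-- `Kₙ(x,y) = exp[a₁,…,aₙ, x^(p+1), y^(q+1)]`. -/
noncomputable def Kn (n p q : ℕ) (a : Fin n → ℝ) (x y : ℝ) : ℝ :=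
  expDD (nodesPQ n p q a x y)

/-- Beta-weighted integral form of `exp[x^(p+1), y^(q+1)]`. -/
noncomputable def K0int (p q : ℕ) (x y : ℝ) : ℝ :=
  (1 / ((Nat.factorial p : ℝ) * (Nat.factorial q : ℝ))) *
    ∫ τ in (0:ℝ)..1, τ ^ p * (1 - τ) ^ q * Real.exp (τ * x + (1 - τ) * y)

/-- First divided difference of the exponential. -/
noncomputable def dd1 (x y : ℝ) : ℝ :=
  if x = y then Real.exp x else (Real.exp x - Real.exp y) / (x - y)

/-- `h(x,y) = eˣ + eʸ − 2·exp[x,y]`. -/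
noncomputable def hxy (x y : ℝ) : ℝ := Real.exp x + Real.exp y - 2 * dd1 x y

/-- `φ(u) = cosh u − sinh u / u`, with `φ(0)=0`. -/
noncomputable def phi (u : ℝ) : ℝ :=
  if u = 0 then 0 else Real.cosh u - Real.sinh u / u

/-- Lower incomplete gamma `γ(n,z) = ∫₀ᶻ t^(n-1) e^(−t) dt` (oriented integral). -/
noncomputable def lowerGamma (n : ℕ) (z : ℝ) : ℝ :=
  ∫ t in (0:ℝ)..z, t ^ (n - 1) * Real.exp (-t)

/-- Sum of the `k` largest coordinates of `y`. -/
noncomputable def topSum {m : ℕ} (k : ℕ) (y : Fin m → ℝ) : ℝ :=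
  sSup {t : ℝ | ∃ S : Finset (Fin m), S.card = k ∧ t = ∑ i ∈ S, y i}

/-- `e^{−t[x₀,…,x_m]}`: the divided difference of `s ↦ e^{−t s}` at the nodes `x`. -/
noncomputable def ddExpNeg (t : ℝ) {m : ℕ} (x : Fin (m + 1) → ℝ) : ℝ :=
  (-t) ^ m * expDD fun i => -t * x i

section Aux
open Real Filter Set Topology

noncomputable def myphi (u : ℝ) : ℝ := Real.cosh u - Real.sinh u / u
noncomputable def myD (u : ℝ) : ℝ := Real.sinh u - Real.cosh u / u + Real.sinh u / u ^ 2

lemma myphi_hasDeriv {u : ℝ} (hu : u ≠ 0) : HasDerivAt myphi (myD u) u := by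
  have h1 : HasDerivAt (fun u : ℝ => Real.sinh u / u)
      ((Real.cosh u * u - Real.sinh u * 1) / u ^ 2) u :=
    (Real.hasDerivAt_sinh u).div (hasDerivAt_id u) hu
  have h2 := (Real.hasDerivAt_cosh u).sub h1
  refine h2.congr_deriv ?_
  unfold myD; field_simp; ring

lemma myD_hasDeriv {u : ℝ} (hu : u ≠ 0) : HasDerivAt myD ((1 + 2 / u ^ 2) * myphi u) u := by
  have h1 : HasDerivAt (fun u : ℝ => Real.cosh u / u)
      ((Real.sinh u * u - Real.cosh u * 1) / u ^ 2) u :=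
    (Real.hasDerivAt_cosh u).div (hasDerivAt_id u) hu
  have h2 : HasDerivAt (fun u : ℝ => u ^ 2) (2 * u) u := by
    simpa using (hasDerivAt_pow 2 u)
  have h3 : HasDerivAt (fun u : ℝ => Real.sinh u / u ^ 2)
      ((Real.cosh u * u ^ 2 - Real.sinh u * (2 * u)) / (u ^ 2) ^ 2) u :=
    (Real.hasDerivAt_sinh u).div h2 (pow_ne_zero 2 hu)
  have h4 := ((Real.hasDerivAt_sinh u).sub h1).add h3
  refine h4.congr_deriv ?_
  unfold myphi; field_simp; ring

lemma myphi_pos {u : ℝ} (hu : 0 < u) : 0 < myphi u := by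
  have key : ∀ v : ℝ, 0 < v → 0 < v * Real.cosh v - Real.sinh v := by
    intro v hv
    have hg : ∀ x : ℝ, HasDerivAt (fun x : ℝ => x * Real.cosh x - Real.sinh x)
        (x * Real.sinh x) x := by
      intro x
      have := ((hasDerivAt_id x).mul (Real.hasDerivAt_cosh x)).sub (Real.hasDerivAt_sinh x)
      exact this.congr_deriv (by simp only [id]; ring)
    have hmono : StrictMonoOn (fun x : ℝ => x * Real.cosh x - Real.sinh x) (Set.Ici 0) := by
      apply strictMonoOn_of_deriv_pos (convex_Ici 0)
        (fun x _ => (hg x).continuousAt.continuousWithinAt)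
      intro x hx
      rw [interior_Ici] at hx
      rw [(hg x).deriv]
      exact mul_pos hx (Real.sinh_pos_iff.mpr hx)
    have := hmono (Set.self_mem_Ici) (Set.mem_Ici.mpr hv.le) hv
    simpa using this
  have h := key u hu
  unfold myphi
  rw [sub_pos, div_lt_iff₀ hu]
  nlinarith

noncomputable def Psi (T s : ℝ) : ℝ := myD s * myphi (T - s) + myphi s * myD (T - s)

lemma Psi_symm (T s : ℝ) : Psi T (T - s) = Psi T s := by
  unfold Psi; rw [sub_sub_cancel]; ring

lemma Psi_hasDeriv {T s : ℝ} (hs : s ≠ 0) (hs' : T - s ≠ 0) :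
    HasDerivAt (Psi T) (myphi s * myphi (T - s) * (2 / s ^ 2 - 2 / (T - s) ^ 2)) s := by
  have hc : HasDerivAt (fun s : ℝ => T - s) (-1) s := (hasDerivAt_id s).const_sub T
  have hphi : HasDerivAt (fun s : ℝ => myphi (T - s)) (myD (T - s) * (-1)) s :=
    (myphi_hasDeriv hs').comp s hc
  have hD : HasDerivAt (fun s : ℝ => myD (T - s))
      ((1 + 2 / (T - s) ^ 2) * myphi (T - s) * (-1)) s :=
    (myD_hasDeriv hs').comp s hc
  have h := ((myD_hasDeriv hs).mul hphi).add ((myphi_hasDeriv hs).mul hD)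
  refine h.congr_deriv ?_
  ring

lemma Psi_mono {T : ℝ} (hT : 0 < T) : MonotoneOn (Psi T) (Set.Ioc 0 (T / 2)) := by
  have hne : ∀ s ∈ Set.Ioc (0:ℝ) (T/2), s ≠ 0 ∧ T - s ≠ 0 := by
    intro s hs
    refine ⟨ne_of_gt hs.1, ne_of_gt ?_⟩
    have := hs.2; linarith
  apply monotoneOn_of_deriv_nonneg (convex_Ioc 0 (T/2))
  · intro s hs
    exact (Psi_hasDeriv (hne s hs).1 (hne s hs).2).continuousAt.continuousWithinAt
  · rw [interior_Ioc]
    intro s hs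
    exact (Psi_hasDeriv (ne_of_gt hs.1) (by have := hs.2; intro h; nlinarith)
      ).differentiableAt.differentiableWithinAt
  · rw [interior_Ioc]
    intro s hs
    obtain ⟨h0, h2⟩ := hs
    have hTs : 0 < T - s := by linarith
    rw [(Psi_hasDeriv (ne_of_gt h0) (ne_of_gt hTs)).deriv]
    have h1 : 0 < myphi s := myphi_pos h0
    have h3 : 0 < myphi (T - s) := myphi_pos hTs
    have h4 : 2 / (T - s) ^ 2 ≤ 2 / s ^ 2 := by
      apply div_le_div_of_nonneg_left (by norm_num) (by positivity)
      nlinarith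
    have h5 : 0 ≤ 2 / s ^ 2 - 2 / (T - s) ^ 2 := by linarith
    exact mul_nonneg (mul_pos h1 h3).le h5

lemma Psi_le {T q s : ℝ} (hq : 0 < q) (h1 : q ≤ s) (h2 : q ≤ T - s) :
    Psi T q ≤ Psi T s := by
  have hT : 0 < T := by linarith
  have hmem_q : q ∈ Set.Ioc (0:ℝ) (T/2) := by
    constructor
    · exact hq
    · by_cases h : s ≤ T / 2
      · linarith
      · linarith
  rcases le_or_gt s (T/2) with h | h
  · exact Psi_mono hT hmem_q ⟨by linarith, h⟩ h1
  · calc Psi T q ≤ Psi T (T - s) := Psi_mono hT hmem_q ⟨by linarith, by linarith⟩ h2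
      _ = Psi T s := Psi_symm T s

lemma myphi_contAt {x : ℝ} (hx : x ≠ 0) : ContinuousAt myphi x :=
  Real.continuous_cosh.continuousAt.sub
    (Real.continuous_sinh.continuousAt.div continuousAt_id hx)

lemma myphi_tendsto_zero : Tendsto myphi (𝓝[>] (0:ℝ)) (𝓝 0) := by
  have hub : ∀ᶠ θ in 𝓝[>] (0:ℝ), myphi θ ≤ Real.cosh θ - 1 := by
    filter_upwards [self_mem_nhdsWithin] with θ hθ
    have hθ' : (0:ℝ) < θ := hθ
    have h1 : θ < Real.sinh θ := Real.self_lt_sinh_iff.mpr hθ'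
    have : 1 ≤ Real.sinh θ / θ := by
      rw [le_div_iff₀ hθ']; linarith
    unfold myphi; linarith
  have hlb : ∀ᶠ θ in 𝓝[>] (0:ℝ), 0 ≤ myphi θ := by
    filter_upwards [self_mem_nhdsWithin] with θ hθ
    exact (myphi_pos hθ).le
  have hg : Tendsto (fun θ : ℝ => Real.cosh θ - 1) (𝓝[>] (0:ℝ)) (𝓝 0) := by
    have := ((Real.continuous_cosh.tendsto 0).mono_left
      (nhdsWithin_le_nhds : 𝓝[>] (0:ℝ) ≤ 𝓝 0)).sub (tendsto_const_nhds (x := (1:ℝ)))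
    simpa using this
  exact squeeze_zero' hlb hub hg

lemma core {p q r : ℝ} (hp : 0 < p) (hq : 0 < q) (hr : 0 < r) :
    myphi q * myphi (p + q + r) + myphi p * myphi r ≤ myphi (p + q) * myphi (q + r) := by
  set F : ℝ → ℝ := fun θ => myphi (p + θ) * myphi (θ + r) - myphi θ * myphi (p + θ + r)
    with hF
  have hFd : ∀ θ : ℝ, 0 < θ → HasDerivAt F
      (myD (p + θ) * myphi (θ + r) + myphi (p + θ) * myD (θ + r)
        - (myD θ * myphi (p + θ + r) + myphi θ * myD (p + θ + r))) θ := by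
    intro θ hθ
    have h1 : HasDerivAt (fun θ : ℝ => myphi (p + θ)) (myD (p + θ)) θ := by
      have := (myphi_hasDeriv (by positivity : p + θ ≠ 0)).comp θ
        ((hasDerivAt_id θ).const_add p)
      exact this.congr_deriv (mul_one _)
    have h2 : HasDerivAt (fun θ : ℝ => myphi (θ + r)) (myD (θ + r)) θ := by
      have := (myphi_hasDeriv (by positivity : θ + r ≠ 0)).comp θ
        ((hasDerivAt_id θ).add_const r)
      exact this.congr_deriv (mul_one _)
    have h3 : HasDerivAt (fun θ : ℝ => myphi (p + θ + r)) (myD (p + θ + r)) θ := by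
      have := (myphi_hasDeriv (by positivity : p + θ + r ≠ 0)).comp θ
        (((hasDerivAt_id θ).const_add p).add_const r)
      exact this.congr_deriv (mul_one _)
    have := (h1.mul h2).sub ((myphi_hasDeriv (ne_of_gt hθ)).mul h3)
    exact this
  have hFmono : MonotoneOn F (Set.Ioi (0:ℝ)) := by
    apply monotoneOn_of_deriv_nonneg (convex_Ioi 0)
    · intro θ hθ
      exact (hFd θ hθ).continuousAt.continuousWithinAt
    · rw [interior_Ioi]
      intro θ hθ
      exact (hFd θ hθ).differentiableAt.differentiableWithinAt
    · rw [interior_Ioi]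
      intro θ hθ
      rw [(hFd θ hθ).deriv]
      have hθ' : (0:ℝ) < θ := hθ
      have key : Psi (p + 2 * θ + r) θ ≤ Psi (p + 2 * θ + r) (p + θ) :=
        Psi_le hθ' (by linarith) (by linarith)
      unfold Psi at key
      rw [show p + 2 * θ + r - θ = p + θ + r by ring,
        show p + 2 * θ + r - (p + θ) = θ + r by ring] at key
      linarith
  have hlim : Tendsto F (𝓝[>] (0:ℝ)) (𝓝 (myphi p * myphi r)) := by
    have hbase : Tendsto (fun θ : ℝ => θ) (𝓝[>] (0:ℝ)) (𝓝 0) :=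
      nhdsWithin_le_nhds
    have t1 : Tendsto (fun θ : ℝ => myphi (p + θ)) (𝓝[>] (0:ℝ)) (𝓝 (myphi p)) := by
      have : Tendsto (fun θ : ℝ => p + θ) (𝓝[>] (0:ℝ)) (𝓝 p) := by
        have h := hbase.const_add p
        simpa using h
      exact (myphi_contAt hp.ne').tendsto.comp this
    have t2 : Tendsto (fun θ : ℝ => myphi (θ + r)) (𝓝[>] (0:ℝ)) (𝓝 (myphi r)) := by
      have : Tendsto (fun θ : ℝ => θ + r) (𝓝[>] (0:ℝ)) (𝓝 r) := by
        have h := hbase.add_const r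
        simpa using h
      exact (myphi_contAt hr.ne').tendsto.comp this
    have t3 : Tendsto (fun θ : ℝ => myphi (p + θ + r)) (𝓝[>] (0:ℝ)) (𝓝 (myphi (p + r))) := by
      have : Tendsto (fun θ : ℝ => p + θ + r) (𝓝[>] (0:ℝ)) (𝓝 (p + r)) := by
        have h := (hbase.const_add p).add_const r
        simpa using h
      exact (myphi_contAt (by positivity : p + r ≠ 0)).tendsto.comp this
    have := (t1.mul t2).sub (myphi_tendsto_zero.mul t3)
    simpa using this
  have hev : ∀ᶠ θ in 𝓝[>] (0:ℝ), F θ ≤ F q := by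
    filter_upwards [Ioc_mem_nhdsGT_of_mem (Set.mem_Ico.mpr ⟨le_refl 0, hq⟩)] with θ hθ
    exact hFmono hθ.1 hq hθ.2
  have hle := le_of_tendsto hlim hev
  have hFq : F q = myphi (p + q) * myphi (q + r) - myphi q * myphi (p + q + r) := rfl
  rw [hFq] at hle
  linarith

lemma Hval {x y : ℝ} (hxy : x < y) :
    Real.exp x + Real.exp y - 2 * ((Real.exp x - Real.exp y) / (x - y))
      = 2 * Real.exp ((x + y) / 2) * myphi ((y - x) / 2) := by
  set u := (y - x) / 2 with hudef
  have hu : (0:ℝ) < u := by rw [hudef]; linarith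
  have h1 : Real.exp ((x+y)/2) * Real.exp u = Real.exp y := by
    rw [← Real.exp_add, hudef]; ring_nf
  have h2 : Real.exp ((x+y)/2) * Real.exp (-u) = Real.exp x := by
    rw [← Real.exp_add, hudef]; ring_nf
  unfold myphi
  rw [Real.cosh_eq, Real.sinh_eq, ← h1, ← h2,
    show x - y = -(2 * u) by rw [hudef]; ring]
  field_simp
  ring

end Aux

theorem stmt10 (a b c d : ℝ) (hab : a < b) (hbc : b < c) (hcd : c < d)
    (H : ℝ → ℝ → ℝ)
    (hH : ∀ x y, x ≠ y →
      H x y = Real.exp x + Real.exp y - 2 * ((Real.exp x - Real.exp y) / (x - y))) :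
    H b c * H a d + H a b * H c d ≤ H a c * H b d := by
  have had : a < d := hab.trans (hbc.trans hcd)
  have hac : a < c := hab.trans hbc
  have hbd : b < d := hbc.trans hcd
  rw [hH b c hbc.ne, hH a d had.ne, hH a b hab.ne, hH c d hcd.ne,
    hH a c hac.ne, hH b d hbd.ne, Hval hbc, Hval had, Hval hab, Hval hcd,
    Hval hac, Hval hbd]
  rw [show (d - a) / 2 = (b - a) / 2 + (c - b) / 2 + (d - c) / 2 by ring,
    show (c - a) / 2 = (b - a) / 2 + (c - b) / 2 by ring,
    show (d - b) / 2 = (c - b) / 2 + (d - c) / 2 by ring]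
  have hp : (0:ℝ) < (b - a) / 2 := by linarith
  have hq : (0:ℝ) < (c - b) / 2 := by linarith
  have hr : (0:ℝ) < (d - c) / 2 := by linarith
  have hcore := core hp hq hr
  have hE1 : Real.exp ((b + c) / 2) * Real.exp ((a + d) / 2)
      = Real.exp ((a + b + c + d) / 2) := by rw [← Real.exp_add]; ring_nf
  have hE2 : Real.exp ((a + b) / 2) * Real.exp ((c + d) / 2)
      = Real.exp ((a + b + c + d) / 2) := by rw [← Real.exp_add]; ring_nf
  have hE3 : Real.exp ((a + c) / 2) * Real.exp ((b + d) / 2)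
      = Real.exp ((a + b + c + d) / 2) := by rw [← Real.exp_add]; ring_nf
  calc 2 * Real.exp ((b + c) / 2) * myphi ((c - b) / 2) *
        (2 * Real.exp ((a + d) / 2) * myphi ((b - a) / 2 + (c - b) / 2 + (d - c) / 2)) +
      2 * Real.exp ((a + b) / 2) * myphi ((b - a) / 2) *
        (2 * Real.exp ((c + d) / 2) * myphi ((d - c) / 2))
      = 4 * Real.exp ((a + b + c + d) / 2) *
          (myphi ((c - b) / 2) * myphi ((b - a) / 2 + (c - b) / 2 + (d - c) / 2) +
            myphi ((b - a) / 2) * myphi ((d - c) / 2)) := by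
        linear_combination
          (4 * myphi ((c - b) / 2) * myphi ((b - a) / 2 + (c - b) / 2 + (d - c) / 2)) * hE1 +
          (4 * myphi ((b - a) / 2) * myphi ((d - c) / 2)) * hE2
    _ ≤ 4 * Real.exp ((a + b + c + d) / 2) *
          (myphi ((b - a) / 2 + (c - b) / 2) * myphi ((c - b) / 2 + (d - c) / 2)) := by
        apply mul_le_mul_of_nonneg_left hcore (by positivity)
    _ = 2 * Real.exp ((a + c) / 2) * myphi ((b - a) / 2 + (c - b) / 2) *
          (2 * Real.exp ((b + d) / 2) * myphi ((c - b) / 2 + (d - c) / 2)) := by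
        linear_combination
          (4 * myphi ((b - a) / 2 + (c - b) / 2) * myphi ((c - b) / 2 + (d - c) / 2)) * hE3.symm
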